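/- Let X₁, …, Xₙ be random variables that are conditionally independent given a σ-algebra G, each with distribution Fᵢ satisfying F̄ᵢ(x) ~ αᵢF̄(x) for a subexponential reference F, and satisfying Assumption D3. Then for any fixed b > 0, P(max_{1≤i≤n} cᵢXᵢ > x) ~ ∑_{i=1}^n P(cᵢXᵢ > x) as x → ∞, uniformly over (c₁, …, cₙ) ∈ [0,b]^n (with the ratio interpreted as 1 when all cᵢ = 0). -/

import Mathlib

open MeasureTheory ProbabilityTheory Filter Topology Set

/-- The (right) tail function of a measure on `ℝ`. -/
noncomputable def tail (μ : MeasureTheory.Measure ℝ) (x : ℝ) : ℝ := (μ (Set.Ioi x)).toReal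

/-- A distribution is long-tailed if `F̄(x+y) ~ F̄(x)` for every `y`. -/
def LongTailed (μ : MeasureTheory.Measure ℝ) : Prop :=
  (∀ x : ℝ, 0 < μ (Set.Ioi x)) ∧
  ∀ y : ℝ, Filter.Tendsto (fun x => tail μ (x + y) / tail μ x) Filter.atTop (nhds 1)

/-- A distribution supported on `[0,∞)` is subexponential if `F̄^{*2}(x) ~ 2 F̄(x)`. -/
def Subexponential (μ : MeasureTheory.Measure ℝ) : Prop :=
  (∀ x : ℝ, 0 < μ (Set.Ioi x)) ∧ μ (Set.Iio 0) = 0 ∧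
  Filter.Tendsto (fun x => tail (μ.conv μ) x / tail μ x) Filter.atTop (nhds 2)

/-- Membership in the class `H(F)` of insensitivity functions of a long-tailed `F`. -/
structure MemH (μ : MeasureTheory.Measure ℝ) (h : ℝ → ℝ) : Prop where
  nonneg : ∀ x, 0 ≤ x → 0 ≤ h x
  mono : MonotoneOn h (Set.Ici 0)
  tendsto_atTop : Filter.Tendsto h Filter.atTop Filter.atTop
  ratio_anti : AntitoneOn (fun x => h x / x) (Set.Ioi 0)
  ratio_zero : Filter.Tendsto (fun x => h x / x) Filter.atTop (nhds 0)
  tail_insensitive :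
    Filter.Tendsto (fun x => tail μ (x - h x) / tail μ x) Filter.atTop (nhds 1)

/-- Assumption D3 of Foss–Richards (2010) with insensitivity function `h ∈ H(F)`:
there are a nondecreasing `r` and events `Bᵢ(x) ∈ G` increasing to `Ω` with
`P(Xᵢ > x | G) 1(Bᵢ(x)) ≤ r(x) F̄(x) 1(Bᵢ(x))` a.s., `P(Bᵢ(h(x))ᶜ) = o(F̄(x))`
uniformly in `i`, `r(x) F̄(h(x)) = o(1)` and
`r(x) ∫_{h(x)}^{x-h(x)} F̄(x-y) F(dy) = o(F̄(x))`. -/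
def AssumptionD3 {Ω : Type*} [MeasurableSpace Ω] (P : MeasureTheory.Measure Ω)
    (G : MeasurableSpace Ω) {ι : Type*} (X : ι → Ω → ℝ)
    (μ : MeasureTheory.Measure ℝ) (h : ℝ → ℝ) : Prop :=
  ∃ (r : ℝ → ℝ) (B : ι → ℝ → Set Ω),
    Monotone r ∧
    (∀ i x, MeasurableSet[G] (B i x)) ∧
    (∀ i, Monotone (B i)) ∧
    (∀ i, (⋃ x : ℝ, B i x) = Set.univ) ∧
    (∀ i x, ∀ᵐ ω ∂P, ω ∈ B i x →
      (P[Set.indicator {ω' | x < X i ω'} (fun _ => (1 : ℝ)) | G]) ω ≤ r x * tail μ x) ∧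
    (∀ ε : ℝ, 0 < ε → ∀ᶠ x in Filter.atTop, ∀ i,
      (P ((B i (h x))ᶜ)).toReal ≤ ε * tail μ x) ∧
    Filter.Tendsto (fun x => r x * tail μ (h x)) Filter.atTop (nhds 0) ∧
    Filter.Tendsto (fun x =>
        (r x * ∫ y in Set.Ioc (h x) (x - h x), tail μ (x - y) ∂μ) / tail μ x)
      Filter.atTop (nhds 0)

lemma toReal_biUnion_le {Ω : Type*} [MeasurableSpace Ω] (P : Measure Ω) [IsFiniteMeasure P]
    {ι : Type*} (s : Finset ι) (A : ι → Set Ω) :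
    (P (⋃ i ∈ s, A i)).toReal ≤ ∑ i ∈ s, (P (A i)).toReal := by
  have h := measure_biUnion_finset_le (μ := P) s A
  calc (P (⋃ i ∈ s, A i)).toReal ≤ (∑ i ∈ s, P (A i)).toReal :=
        ENNReal.toReal_mono (ENNReal.sum_ne_top.mpr fun i _ => measure_ne_top P _) h
    _ = ∑ i ∈ s, (P (A i)).toReal := ENNReal.toReal_sum fun i _ => measure_ne_top P _

lemma bonferroni_real {Ω : Type*} [MeasurableSpace Ω] (P : Measure Ω) [IsFiniteMeasure P]
    {ι : Type*} [DecidableEq ι] (s : Finset ι) (A : ι → Set Ω)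
    (hA : ∀ i, MeasurableSet (A i)) :
    ∑ i ∈ s, (P (A i)).toReal ≤ (P (⋃ i ∈ s, A i)).toReal
      + ∑ i ∈ s, ∑ j ∈ s.erase i, (P (A i ∩ A j)).toReal := by
  classical
  induction s using Finset.induction with
  | empty => simp
  | @insert a s ha ih =>
    rw [Finset.sum_insert ha]
    have hU : (⋃ i ∈ insert a s, A i) = A a ∪ ⋃ i ∈ s, A i := by
      simp [Set.biUnion_insert]
    -- measure_union_add_inter
    have hkey : (P (A a ∪ ⋃ i ∈ s, A i)).toReal + (P (A a ∩ ⋃ i ∈ s, A i)).toReal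
        = (P (A a)).toReal + (P (⋃ i ∈ s, A i)).toReal := by
      have := measure_union_add_inter (μ := P) (A a) (MeasurableSet.biUnion s.countable_toSet
        (fun i _ => hA i))
      have h1 := congrArg ENNReal.toReal this
      rw [ENNReal.toReal_add (measure_ne_top P _) (measure_ne_top P _),
        ENNReal.toReal_add (measure_ne_top P _) (measure_ne_top P _)] at h1
      exact h1
    have hcap : (P (A a ∩ ⋃ i ∈ s, A i)).toReal ≤ ∑ j ∈ s, (P (A a ∩ A j)).toReal := by
      have : A a ∩ ⋃ i ∈ s, A i = ⋃ i ∈ s, A a ∩ A i := by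
        rw [Set.inter_iUnion₂]
      rw [this]
      exact toReal_biUnion_le P s _
    -- double sum over insert
    have hdouble : ∑ j ∈ s, (P (A a ∩ A j)).toReal
          + ∑ i ∈ s, ∑ j ∈ s.erase i, (P (A i ∩ A j)).toReal
        ≤ ∑ i ∈ insert a s, ∑ j ∈ (insert a s).erase i, (P (A i ∩ A j)).toReal := by
      rw [Finset.sum_insert ha, Finset.erase_insert ha]
      refine add_le_add le_rfl (Finset.sum_le_sum fun i hi => ?_)
      have hia : i ≠ a := fun hia => ha (hia ▸ hi)
      have he : (insert a s).erase i = insert a (s.erase i) :=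
        Finset.erase_insert_of_ne hia.symm
      rw [he, Finset.sum_insert (by simp [ha, Finset.mem_erase])]
      have : (0:ℝ) ≤ (P (A i ∩ A a)).toReal := ENNReal.toReal_nonneg
      linarith
    have hfin := ih
    calc (P (A a)).toReal + ∑ i ∈ s, (P (A i)).toReal
        ≤ (P (A a)).toReal + ((P (⋃ i ∈ s, A i)).toReal
            + ∑ i ∈ s, ∑ j ∈ s.erase i, (P (A i ∩ A j)).toReal) := by linarith
      _ ≤ (P (⋃ i ∈ insert a s, A i)).toReal
            + ∑ i ∈ insert a s, ∑ j ∈ (insert a s).erase i, (P (A i ∩ A j)).toReal := by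
          rw [hU]
          have := hkey
          have := hcap
          have := hdouble
          linarith

lemma pair_bound {Ω : Type*} (G : MeasurableSpace Ω) [mΩ : MeasurableSpace Ω]
    [StandardBorelSpace Ω] (hG : G ≤ mΩ)
    (P : Measure Ω) [IsProbabilityMeasure P] (Y Z : Ω → ℝ) (hY : Measurable Y) (hZ : Measurable Z)
    (hind : ProbabilityTheory.CondIndepFun G hG Y Z P)
    (s t : ℝ) (Bs : Set Ω) (hBs : MeasurableSet[G] Bs)
    (δ : ℝ) (hδ : 0 ≤ δ)
    (hbound : ∀ᵐ ω ∂P, ω ∈ Bs →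
      (P[Set.indicator {ω' | s < Y ω'} (fun _ => (1:ℝ)) | G]) ω ≤ δ) :
    (P (Y⁻¹' Ioi s ∩ Z⁻¹' Ioi t)).toReal
      ≤ δ * (P (Z ⁻¹' Ioi t)).toReal + (P Bsᶜ).toReal := by
  have hYs : MeasurableSet (Y ⁻¹' Ioi s) := hY measurableSet_Ioi
  have hZt : MeasurableSet (Z ⁻¹' Ioi t) := hZ measurableSet_Ioi
  have hBsc : MeasurableSet Bsᶜ := (hG _ hBs).compl
  set fY := P[(Y ⁻¹' Ioi s).indicator (fun _ => (1:ℝ)) | G] with hfY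
  set fZ := P[(Z ⁻¹' Ioi t).indicator (fun _ => (1:ℝ)) | G] with hfZ
  have hprod : (P⟦Y ⁻¹' Ioi s ∩ Z ⁻¹' Ioi t | G⟧) =ᵐ[P] fun ω => fY ω * fZ ω :=
    (condIndepFun_iff_condExp_inter_preimage_eq_mul hY hZ).mp hind _ _
      measurableSet_Ioi measurableSet_Ioi
  have hintY : Integrable ((Y ⁻¹' Ioi s).indicator (fun _ => (1:ℝ))) P :=
    (integrable_const 1).indicator hYs
  have hintZ : Integrable ((Z ⁻¹' Ioi t).indicator (fun _ => (1:ℝ))) P :=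
    (integrable_const 1).indicator hZt
  have hintYZ : Integrable ((Y ⁻¹' Ioi s ∩ Z ⁻¹' Ioi t).indicator (fun _ => (1:ℝ))) P :=
    (integrable_const 1).indicator (hYs.inter hZt)
  have hfZ0 : 0 ≤ᵐ[P] fZ :=
    condExp_nonneg (Eventually.of_forall fun ω => indicator_nonneg (fun _ _ => zero_le_one) ω)
  have hfY0 : 0 ≤ᵐ[P] fY :=
    condExp_nonneg (Eventually.of_forall fun ω => indicator_nonneg (fun _ _ => zero_le_one) ω)
  have hone : P[(fun _ : Ω => (1:ℝ))|G] = fun _ => 1 := condExp_const hG (1:ℝ)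
  have hfY1 : fY ≤ᵐ[P] fun _ => (1:ℝ) := by
    have := condExp_mono (m := G) (μ := P) hintY (integrable_const 1)
      (Eventually.of_forall fun ω => indicator_le_self' (fun _ _ => zero_le_one) ω)
    rwa [hone] at this
  have hfZ1 : fZ ≤ᵐ[P] fun _ => (1:ℝ) := by
    have := condExp_mono (m := G) (μ := P) hintZ (integrable_const 1)
      (Eventually.of_forall fun ω => indicator_le_self' (fun _ _ => zero_le_one) ω)
    rwa [hone] at this
  have hbound' : ∀ᵐ ω ∂P, ω ∈ Bs → fY ω ≤ δ := by
    have hset : {ω' | s < Y ω'} = Y ⁻¹' Ioi s := rfl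
    simpa [hset, ← hfY] using hbound
  have hae : (fun ω => fY ω * fZ ω) ≤ᵐ[P]
      fun ω => δ * fZ ω + Bsᶜ.indicator (fun _ => (1:ℝ)) ω := by
    filter_upwards [hfY0, hfZ0, hfY1, hfZ1, hbound'] with ω h0Y h0Z h1Y h1Z hb
    by_cases hω : ω ∈ Bs
    · have h1 : fY ω * fZ ω ≤ δ * fZ ω := mul_le_mul_of_nonneg_right (hb hω) h0Z
      have h2 : (0:ℝ) ≤ Bsᶜ.indicator (fun _ => (1:ℝ)) ω :=
        indicator_nonneg (fun _ _ => zero_le_one) ω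
      linarith
    · have h1 : fY ω * fZ ω ≤ 1 := by
        calc fY ω * fZ ω ≤ 1 * fZ ω := mul_le_mul_of_nonneg_right h1Y h0Z
        _ = fZ ω := one_mul _
        _ ≤ 1 := h1Z
      have h2 : Bsᶜ.indicator (fun _ => (1:ℝ)) ω = 1 := Set.indicator_of_mem (by simpa using hω) _
      have h3 : (0:ℝ) ≤ δ * fZ ω := mul_nonneg hδ h0Z
      linarith
  have hintprod : Integrable (fun ω => fY ω * fZ ω) P :=
    (integrable_condExp (f := (Y ⁻¹' Ioi s ∩ Z ⁻¹' Ioi t).indicator (fun _ => (1:ℝ)))).congr hprod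
  have hintind : Integrable (Bsᶜ.indicator (fun _ => (1:ℝ))) P := (integrable_const 1).indicator hBsc
  have hintrhs : Integrable (fun ω => δ * fZ ω + Bsᶜ.indicator (fun _ => (1:ℝ)) ω) P :=
    (integrable_condExp.const_mul δ).add hintind
  have key : ∫ ω, fY ω * fZ ω ∂P ≤ δ * (P (Z ⁻¹' Ioi t)).toReal + (P Bsᶜ).toReal := by
    calc ∫ ω, fY ω * fZ ω ∂P
        ≤ ∫ ω, (δ * fZ ω + Bsᶜ.indicator (fun _ => (1:ℝ)) ω) ∂P :=
          integral_mono_ae hintprod hintrhs hae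
      _ = δ * ∫ ω, fZ ω ∂P + ∫ ω, Bsᶜ.indicator (fun _ => (1:ℝ)) ω ∂P := by
          rw [integral_add (integrable_condExp.const_mul δ) hintind, integral_const_mul]
      _ = δ * (P (Z ⁻¹' Ioi t)).toReal + (P Bsᶜ).toReal := by
          have e1 : ∫ x, (Z ⁻¹' Ioi t).indicator (fun _ => (1:ℝ)) x ∂P
              = (P (Z ⁻¹' Ioi t)).toReal := integral_indicator_one hZt
          have e2 : ∫ x, Bsᶜ.indicator (fun _ => (1:ℝ)) x ∂P
              = (P Bsᶜ).toReal := integral_indicator_one hBsc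
          rw [hfZ, integral_condExp hG, e1, e2]
  calc (P (Y⁻¹' Ioi s ∩ Z⁻¹' Ioi t)).toReal
      = ∫ ω, (Y ⁻¹' Ioi s ∩ Z ⁻¹' Ioi t).indicator (fun _ => (1:ℝ)) ω ∂P :=
        (integral_indicator_one (hYs.inter hZt) : _ = _).symm
    _ = ∫ ω, (P⟦Y ⁻¹' Ioi s ∩ Z ⁻¹' Ioi t | G⟧) ω ∂P := (integral_condExp hG).symm
    _ = ∫ ω, fY ω * fZ ω ∂P := integral_congr_ae hprod
    _ ≤ _ := key

/-- Uniform asymptotics for the weighted maximum of conditionally independent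
random variables with subexponential reference distribution:
`P(max cᵢXᵢ > x) ~ ∑ P(cᵢXᵢ > x)` uniformly over `(c₁,…,cₙ) ∈ [0,b]^n`. -/
theorem weighted_max_uniform_asymptotics
    {Ω : Type*} (G : MeasurableSpace Ω) [mΩ : MeasurableSpace Ω] [StandardBorelSpace Ω]
    (P : MeasureTheory.Measure Ω) [MeasureTheory.IsProbabilityMeasure P]
    (hG : G ≤ mΩ)
    (μ : MeasureTheory.Measure ℝ) [MeasureTheory.IsProbabilityMeasure μ]
    (hS : Subexponential μ)
    (n : ℕ) (X : Fin n → Ω → ℝ) (hXmeas : ∀ i, Measurable (X i))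
    (hD1 : ProbabilityTheory.iCondIndepFun (mΩ := mΩ) G hG X P)
    (α : Fin n → ℝ) (hα : ∀ i, 0 < α i)
    (hD2 : ∀ i, Filter.Tendsto
      (fun x => (P {ω | x < X i ω}).toReal / tail μ x) Filter.atTop (nhds (α i)))
    (h : ℝ → ℝ) (hmemH : MemH μ h) (hD3 : AssumptionD3 P G X μ h)
    (b : ℝ) (hb : 0 < b) :
    ∀ ε : ℝ, 0 < ε → ∀ᶠ x in Filter.atTop, ∀ c : Fin n → ℝ,
      (∀ i, c i ∈ Set.Icc 0 b) →
      |(P {ω | ∃ i, x < c i * X i ω}).toReal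
          - ∑ i, (P {ω | x < c i * X i ω}).toReal|
        ≤ ε * ∑ i, (P {ω | x < c i * X i ω}).toReal := by
  intro ε hε
  classical
  obtain ⟨r, B, hrmono, hBmeas, hBmono, hBunion, hbound, hBsmall, hrtail, _⟩ := hD3
  have htpos : ∀ s, 0 < tail μ s :=
    fun s => ENNReal.toReal_pos (hS.1 s).ne' (measure_ne_top μ _)
  set K : ℝ := 1 + ∑ i, 2 / α i with hKdef
  have hKi : ∀ i, 2 / α i ≤ K := by
    intro i
    have h1 : 2 / α i ≤ ∑ j, 2 / α j :=
      Finset.single_le_sum (f := fun j : Fin n => 2 / α j)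
        (fun j _ => div_nonneg (by norm_num) (hα j).le) (Finset.mem_univ i)
    simp only [hKdef]; linarith
  have hK0 : (0:ℝ) ≤ K := by
    have : (0:ℝ) ≤ ∑ j, 2 / α j :=
      Finset.sum_nonneg fun j _ => div_nonneg (by norm_num) (hα j).le
    simp only [hKdef]; linarith
  set δ : ℝ := ε / (n * (1 + K) + 1) with hδdef
  have hn1K : (0:ℝ) < n * (1 + K) + 1 := by positivity
  have hδpos : 0 < δ := by positivity
  have hδK : δ * (n * (1 + K)) ≤ ε := by
    have : δ * (n * (1 + K)) ≤ δ * (n * (1 + K) + 1) := by nlinarith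
    calc δ * (n * (1 + K)) ≤ δ * (n * (1 + K) + 1) := this
      _ = ε := by rw [hδdef]; field_simp
  -- eventual conditions in the threshold variable s
  have hE1 : ∀ᶠ s in atTop, h s ≤ s := by
    filter_upwards [hmemH.ratio_zero.eventually (eventually_lt_nhds (by norm_num : (0:ℝ) < 1)),
      eventually_gt_atTop (0:ℝ)] with s h1 h2
    exact ((div_lt_one h2).mp h1).le
  have hE2 : ∀ᶠ s in atTop, r s * tail μ s ≤ δ := by
    filter_upwards [hE1, hrtail.eventually (eventually_lt_nhds hδpos)] with s h1 h2
    rcases le_or_gt 0 (r s) with h0 | h0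
    · have hmono : tail μ s ≤ tail μ (h s) :=
        ENNReal.toReal_mono (measure_ne_top μ _) (measure_mono (Set.Ioi_subset_Ioi h1))
      calc r s * tail μ s ≤ r s * tail μ (h s) := mul_le_mul_of_nonneg_left hmono h0
        _ ≤ δ := h2.le
    · exact (mul_nonpos_of_nonpos_of_nonneg h0.le ENNReal.toReal_nonneg).trans hδpos.le
  have hE3 : ∀ᶠ s in atTop, ∀ i, (P ((B i (h s))ᶜ)).toReal ≤ δ * tail μ s := hBsmall δ hδpos
  have hE4 : ∀ᶠ s in atTop, ∀ i, tail μ s ≤ K * (P (X i ⁻¹' Set.Ioi s)).toReal := by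
    rw [eventually_all]
    intro i
    filter_upwards [(hD2 i).eventually (eventually_gt_nhds (by linarith [hα i] : α i / 2 < α i))]
      with s hs
    have hset : {ω | s < X i ω} = X i ⁻¹' Set.Ioi s := rfl
    rw [hset] at hs
    set p := (P (X i ⁻¹' Set.Ioi s)).toReal with hp
    have hp0 : 0 ≤ p := ENNReal.toReal_nonneg
    have h1 : α i / 2 * tail μ s < p := (lt_div_iff₀ (htpos s)).mp hs
    have h2 : tail μ s ≤ 2 / α i * p := by
      rw [div_mul_eq_mul_div, le_div_iff₀ (hα i)]
      nlinarith [htpos s]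
    exact h2.trans (mul_le_mul_of_nonneg_right (hKi i) hp0)
  obtain ⟨x₀, hx₀⟩ := eventually_atTop.mp ((hE1.and hE2).and (hE3.and hE4))
  -- the final eventual statement in x
  filter_upwards [eventually_ge_atTop (b * x₀), eventually_ge_atTop (1:ℝ)] with x hxb hx1
  intro c hc
  have hxpos : (0:ℝ) < x := lt_of_lt_of_le one_pos hx1
  set A : Fin n → Set Ω := fun i => {ω | x < c i * X i ω} with hAdef
  have hAmeas : ∀ i, MeasurableSet (A i) :=
    fun i => measurableSet_lt measurable_const ((hXmeas i).const_mul (c i))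
  have hAzero : ∀ i, c i = 0 → A i = ∅ := by
    intro i hci
    ext ω
    simp only [hAdef, Set.mem_setOf_eq, hci, zero_mul, Set.mem_empty_iff_false, iff_false,
      not_lt]
    linarith
  have hApos : ∀ i, 0 < c i → A i = X i ⁻¹' Set.Ioi (x / c i) := by
    intro i hci
    ext ω
    simp only [hAdef, Set.mem_setOf_eq, Set.mem_preimage, Set.mem_Ioi]
    rw [div_lt_iff₀ hci]
    constructor <;> intro h' <;> linarith [mul_comm (c i) (X i ω)]
  have hsge : ∀ i, 0 < c i → x₀ ≤ x / c i := by
    intro i hci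
    have h1 : x₀ ≤ x / b := by
      rw [le_div_iff₀ hb]
      linarith [mul_comm x₀ b]
    have h2 : x / b ≤ x / c i := (div_le_div_iff_of_pos_left hxpos hb hci).mpr (hc i).2
    linarith
  -- the pairwise bound
  have hpair : ∀ i j, i ≠ j → (P (A i ∩ A j)).toReal
      ≤ δ * (P (A j)).toReal + δ * K * (P (A i)).toReal := by
    intro i j hij
    rcases eq_or_lt_of_le (hc i).1 with hci | hci
    · rw [hAzero i hci.symm]
      simp only [Set.empty_inter, measure_empty, ENNReal.toReal_zero]
      positivity
    rcases eq_or_lt_of_le (hc j).1 with hcj | hcj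
    · rw [hAzero j hcj.symm]
      simp only [Set.inter_empty, measure_empty, ENNReal.toReal_zero]
      positivity
    obtain ⟨⟨hhs, hrs⟩, hBs, htK⟩ := hx₀ (x / c i) (hsge i hci)
    rw [hApos i hci, hApos j hcj]
    have hind : ProbabilityTheory.CondIndepFun G hG (X i) (X j) P := hD1.condIndepFun hij
    have hboundδ : ∀ᵐ ω ∂P, ω ∈ B i (x / c i) →
        (P[Set.indicator {ω' | (x / c i) < X i ω'} (fun _ => (1:ℝ)) | G]) ω ≤ δ := by
      filter_upwards [hbound i (x / c i)] with ω hω hmem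
      exact (hω hmem).trans hrs
    have h1 := pair_bound G hG P (X i) (X j) (hXmeas i) (hXmeas j) hind (x / c i) (x / c j)
      (B i (x / c i)) (hBmeas i (x / c i)) δ hδpos.le hboundδ
    have h2 : (P ((B i (x / c i))ᶜ)).toReal ≤ (P ((B i (h (x / c i)))ᶜ)).toReal :=
      ENNReal.toReal_mono (measure_ne_top P _)
        (measure_mono (Set.compl_subset_compl.mpr (hBmono i hhs)))
    have h3 : (P ((B i (h (x / c i)))ᶜ)).toReal ≤ δ * tail μ (x / c i) := hBs i
    have h4 : tail μ (x / c i) ≤ K * (P (X i ⁻¹' Set.Ioi (x / c i))).toReal := htK i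
    have h5 : δ * tail μ (x / c i) ≤ δ * K * (P (X i ⁻¹' Set.Ioi (x / c i))).toReal := by
      calc δ * tail μ (x / c i) ≤ δ * (K * (P (X i ⁻¹' Set.Ioi (x / c i))).toReal) :=
            mul_le_mul_of_nonneg_left h4 hδpos.le
        _ = δ * K * (P (X i ⁻¹' Set.Ioi (x / c i))).toReal := by ring
    linarith
  -- sums
  set S : ℝ := ∑ i, (P (A i)).toReal with hSdef
  have hS0 : 0 ≤ S := Finset.sum_nonneg fun i _ => ENNReal.toReal_nonneg
  have hsetU : {ω | ∃ i, x < c i * X i ω} = ⋃ i, A i := by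
    ext ω
    simp only [Set.mem_setOf_eq, Set.mem_iUnion, hAdef]
  have hub : (P (⋃ i, A i)).toReal ≤ S := by
    have := toReal_biUnion_le P Finset.univ A
    simpa [Set.biUnion_univ] using this
  have hlb : S ≤ (P (⋃ i, A i)).toReal
      + ∑ i, ∑ j ∈ Finset.univ.erase i, (P (A i ∩ A j)).toReal := by
    have := bonferroni_real P Finset.univ A hAmeas
    simpa [Set.biUnion_univ] using this
  have hD : ∑ i, ∑ j ∈ Finset.univ.erase i, (P (A i ∩ A j)).toReal ≤ ε * S := by
    have hinner : ∀ i : Fin n, ∑ j ∈ Finset.univ.erase i, (P (A i ∩ A j)).toReal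
        ≤ δ * S + n * (δ * K * (P (A i)).toReal) := by
      intro i
      have step1 : ∑ j ∈ Finset.univ.erase i, (P (A i ∩ A j)).toReal
          ≤ ∑ j ∈ Finset.univ.erase i,
              (δ * (P (A j)).toReal + δ * K * (P (A i)).toReal) := by
        refine Finset.sum_le_sum fun j hj => ?_
        exact hpair i j (Finset.ne_of_mem_erase hj).symm
      have step2 : ∑ j ∈ Finset.univ.erase i,
            (δ * (P (A j)).toReal + δ * K * (P (A i)).toReal)
          = δ * ∑ j ∈ Finset.univ.erase i, (P (A j)).toReal
            + (Finset.univ.erase i).card * (δ * K * (P (A i)).toReal) := by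
        rw [Finset.sum_add_distrib, Finset.sum_const, ← Finset.mul_sum]
        simp [nsmul_eq_mul]
      have step3 : δ * ∑ j ∈ Finset.univ.erase i, (P (A j)).toReal ≤ δ * S := by
        refine mul_le_mul_of_nonneg_left ?_ hδpos.le
        exact Finset.sum_le_sum_of_subset_of_nonneg (Finset.subset_univ _)
          fun j _ _ => ENNReal.toReal_nonneg
      have step4 : ((Finset.univ.erase i).card : ℝ) * (δ * K * (P (A i)).toReal)
          ≤ n * (δ * K * (P (A i)).toReal) := by
        refine mul_le_mul_of_nonneg_right ?_ (by positivity)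
        have : (Finset.univ.erase i).card ≤ n := by
          calc (Finset.univ.erase i).card ≤ (Finset.univ : Finset (Fin n)).card :=
                Finset.card_le_card (Finset.erase_subset _ _)
            _ = n := by simp
        exact_mod_cast this
      calc ∑ j ∈ Finset.univ.erase i, (P (A i ∩ A j)).toReal
          ≤ _ := step1
        _ = _ := step2
        _ ≤ δ * S + n * (δ * K * (P (A i)).toReal) := by linarith
    calc ∑ i, ∑ j ∈ Finset.univ.erase i, (P (A i ∩ A j)).toReal
        ≤ ∑ i : Fin n, (δ * S + n * (δ * K * (P (A i)).toReal)) :=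
          Finset.sum_le_sum fun i _ => hinner i
      _ = n * (δ * S) + n * (δ * K) * S := by
          rw [Finset.sum_add_distrib, Finset.sum_const, hSdef]
          simp only [← Finset.mul_sum, Finset.card_univ, Fintype.card_fin, nsmul_eq_mul]
          ring
      _ = δ * (n * (1 + K)) * S := by ring
      _ ≤ ε * S := mul_le_mul_of_nonneg_right hδK hS0
  have habs : |(P {ω | ∃ i, x < c i * X i ω}).toReal - S| ≤ ε * S := by
    rw [hsetU, abs_sub_comm, abs_of_nonneg (by linarith : (0:ℝ) ≤ S - (P (⋃ i, A i)).toReal)]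
    linarith
  exact habs
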